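/- Let G be a graph and G' the graph obtained by adding, for each vertex a of G, a new vertex e_{ab} of each edge {a,b} subdividing it once (so edges of G become paths of length 2), plus three new mutually adjacent vertices t, t₁, t₂ with t additionally adjacent to every original vertex of G. If G is nonempty, then t is the unique vertex of G' of degree greater than 2 that lies on a 3-cycle, and the original vertices of G are exactly the vertices adjacent to t that lie on no 3-cycle. -/
import Mathlib
set_option maxHeartbeats 1000000

/-- Auxiliary relation for the graph `G'`: each edge `{a,b}` of `G` is subdivided
once by a new vertex, and three new mutually adjacent vertices `t = 0`, `t₁ = 1`,
`t₂ = 2` are added, with `t` moreover adjacent to every original vertex of `G`. -/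
def GprimeRel {α : Type} (G : SimpleGraph α) :
    (α ⊕ ({e : Sym2 α // e ∈ G.edgeSet} ⊕ Fin 3)) →
    (α ⊕ ({e : Sym2 α // e ∈ G.edgeSet} ⊕ Fin 3)) → Prop
  | Sum.inl a, Sum.inr (Sum.inl e) => a ∈ e.val
  | Sum.inl _, Sum.inr (Sum.inr t) => t = 0
  | Sum.inr (Sum.inr _), Sum.inr (Sum.inr _) => True
  | _, _ => False

/-- The graph `G'` obtained from `G` by the diameter-reduction construction. -/
def Gprime {α : Type} (G : SimpleGraph α) :
    SimpleGraph (α ⊕ ({e : Sym2 α // e ∈ G.edgeSet} ⊕ Fin 3)) :=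
  SimpleGraph.fromRel (GprimeRel G)

/-- `v` lies on a 3-cycle of the graph `H`. -/
def InTriangle {V : Type*} (H : SimpleGraph V) (v : V) : Prop :=
  ∃ u w, H.Adj v u ∧ H.Adj v w ∧ H.Adj u w

lemma gadj {α : Type} (G : SimpleGraph α) (x y) :
    (Gprime G).Adj x y ↔ x ≠ y ∧ (GprimeRel G x y ∨ GprimeRel G y x) :=
  SimpleGraph.fromRel_adj _ x y

lemma no_tri_inl {α : Type} (G : SimpleGraph α) (a : α) :
    ¬ InTriangle (Gprime G) (Sum.inl a) := by
  rintro ⟨u, w, h1, h2, h3⟩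
  rcases u with b | e | t <;> rcases w with b' | e' | t' <;>
    simp [gadj, GprimeRel] at h1 h2 h3 <;> simp_all

lemma no_tri_edge {α : Type} (G : SimpleGraph α) (e) :
    ¬ InTriangle (Gprime G) (Sum.inr (Sum.inl e)) := by
  rintro ⟨u, w, h1, h2, h3⟩
  rcases u with b | e1 | t <;> rcases w with b' | e1' | t' <;>
    simp [gadj, GprimeRel] at h1 h2 h3 <;> simp_all

/-- If `G` is nonempty, then `t` is the unique vertex of `G'` of degree `> 2` lying
on a 3-cycle, and the original vertices of `G` are exactly the vertices of `G'`
adjacent to `t` that lie on no 3-cycle. -/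
theorem Gprime_definability {α : Type} [Nonempty α] (G : SimpleGraph α) :
    (∀ v, ((∃ s : Finset (α ⊕ ({e : Sym2 α // e ∈ G.edgeSet} ⊕ Fin 3)),
          3 ≤ s.card ∧ ↑s ⊆ (Gprime G).neighborSet v) ∧ InTriangle (Gprime G) v) ↔
        v = Sum.inr (Sum.inr 0)) ∧
    (∀ v, ((Gprime G).Adj v (Sum.inr (Sum.inr 0)) ∧ ¬ InTriangle (Gprime G) v) ↔
        ∃ a : α, v = Sum.inl a) := by
  classical
  constructor
  · intro v
    constructor
    · rintro ⟨⟨s, hs3, hsub⟩, htri⟩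
      rcases v with a | e | t
      · exact absurd htri (no_tri_inl G a)
      · exact absurd htri (no_tri_edge G e)
      · -- t : Fin 3; if t ≠ 0, neighbors ⊆ two elements
        by_contra h
        have ht : t ≠ 0 := by simpa using h
        have key : ∀ (u w : α ⊕ ({e : Sym2 α // e ∈ G.edgeSet} ⊕ Fin 3)),
            t ≠ 0 →
            (∀ x ∈ s, x = u ∨ x = w) → False := by
          intro u w _ hsub2
          have : s ⊆ ({u, w} : Finset _) := by
            intro x hx; simpa using hsub2 x hx
          have h2 : s.card ≤ 2 :=
            (Finset.card_le_card this).trans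
              ((Finset.card_insert_le _ _).trans (by simp))
          omega
        refine key (Sum.inr (Sum.inr 0))
          (Sum.inr (Sum.inr (if t = 1 then 2 else 1))) ht ?_
        intro x hx
        have := hsub hx
        have fin3 : ∀ t t' : Fin 3, t ≠ 0 → ¬ t = t' →
            (t' = 0 ∨ t' = if t = 1 then 2 else 1) := by decide
        rcases x with b | e | t'
        · simp [SimpleGraph.mem_neighborSet, gadj, GprimeRel] at this
          exact absurd this ht
        · simp [SimpleGraph.mem_neighborSet, gadj, GprimeRel] at this
        · simp only [SimpleGraph.mem_neighborSet, gadj, GprimeRel, ne_eq,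
            Sum.inr.injEq, or_true, and_true] at this
          simp only [Sum.inr.injEq]
          exact fin3 t t' ht this
    · rintro rfl
      refine ⟨⟨{Sum.inl (Classical.arbitrary α), Sum.inr (Sum.inr 1), Sum.inr (Sum.inr 2)}, ?_, ?_⟩, ?_⟩
      · rw [Finset.card_insert_of_notMem (by simp), Finset.card_insert_of_notMem (by simp), Finset.card_singleton]
      · intro x hx
        simp only [Finset.coe_insert, Finset.coe_singleton, Set.mem_insert_iff, Set.mem_singleton_iff] at hx
        rcases hx with rfl | rfl | rfl <;>
          simp [SimpleGraph.mem_neighborSet, gadj, GprimeRel]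
      · exact ⟨Sum.inr (Sum.inr 1), Sum.inr (Sum.inr 2), by simp [gadj, GprimeRel], by simp [gadj, GprimeRel], by simp [gadj, GprimeRel]⟩
  · intro v
    constructor
    · rintro ⟨hadj, htri⟩
      rcases v with a | e | t
      · exact ⟨a, rfl⟩
      · simp [gadj, GprimeRel] at hadj
      · exfalso
        apply htri
        fin_cases t
        · exact ⟨Sum.inr (Sum.inr 1), Sum.inr (Sum.inr 2), by simp [gadj, GprimeRel],
            by simp [gadj, GprimeRel], by simp [gadj, GprimeRel]⟩
        · exact ⟨Sum.inr (Sum.inr 0), Sum.inr (Sum.inr 2), by simp [gadj, GprimeRel],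
            by simp [gadj, GprimeRel], by simp [gadj, GprimeRel]⟩
        · exact ⟨Sum.inr (Sum.inr 0), Sum.inr (Sum.inr 1), by simp [gadj, GprimeRel],
            by simp [gadj, GprimeRel], by simp [gadj, GprimeRel]⟩
    · rintro ⟨a, rfl⟩
      exact ⟨by simp [gadj, GprimeRel], no_tri_inl G a⟩
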